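/- Let F be the set of (n−1)×(n−1) real matrices τ supported on 𝒥 (τ_{jk} = 0 whenever j ∉ 𝒥 or k ∉ 𝒥) that satisfy the entrywise constraints 0 ≤ I_{n−1} − τ ≤ 1, 0 ≤ τ 1_𝒥^- ≤ 1, 0 ≤ r_𝒥^- τ ≤ 1, and 0 ≤ r_𝒥^- τ 1_𝒥^- ≤ 1. Then F is nonempty, convex, and compact, and for any vectors x, y ∈ ℝ^n the linear objective τ ↦ x^T τ^{(p)}_{(𝒥)} y attains its minimum on F at some τ* ∈ F, for which the matrix I − (τ*)^{(p)}_{(𝒥)} belongs to ⟨p⟩^+. -/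

import Mathlib

open Matrix

/-- The ratio `r_j := p_j / p_n` for `j ∈ [n-1]`, with the state space `[n]` modeled as
`Fin (m+1)`, the last state `n` as `Fin.last m`, and `[n-1]` as `Fin m` via `Fin.castSucc`. -/
noncomputable def r (m : ℕ) (p : Fin (m + 1) → ℝ) (j : Fin m) : ℝ :=
  p j.castSucc / p (Fin.last m)

/-- `1_𝒥^-`, the indicator (column) vector of `𝒥 ⊆ [n-1]` in `ℝ^{n-1}`. -/
def oneJ (m : ℕ) (𝒥 : Finset (Fin m)) : Fin m → ℝ :=
  fun j => if j ∈ 𝒥 then 1 else 0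

/-- `r_𝒥^-`, the row vector in `ℝ^{n-1}` with `(r_𝒥^-)_j = r_j` for `j ∈ 𝒥`, `0` otherwise. -/
noncomputable def rJ (m : ℕ) (p : Fin (m + 1) → ℝ) (𝒥 : Finset (Fin m)) : Fin m → ℝ :=
  fun j => if j ∈ 𝒥 then r m p j else 0

/-- The block matrix `τ^{(p)}_{(𝒥)}`: upper-left `(n-1) × (n-1)` block `τ`, first `n-1`
entries of the last column `−τ 1_𝒥^-`, first `n-1` entries of the last row `−r_𝒥^- τ`,
and `(n,n)` entry `r_𝒥^- τ 1_𝒥^-`. -/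
noncomputable def tauExt (m : ℕ) (p : Fin (m + 1) → ℝ) (𝒥 : Finset (Fin m))
    (τ : Matrix (Fin m) (Fin m) ℝ) : Matrix (Fin (m + 1)) (Fin (m + 1)) ℝ :=
  Matrix.of fun a b =>
    Fin.lastCases
      (Fin.lastCases (dotProduct (rJ m p 𝒥) (τ.mulVec (oneJ m 𝒥)))
        (fun b' => -(Matrix.vecMul (rJ m p 𝒥) τ b')) b)
      (fun a' => Fin.lastCases (-(τ.mulVec (oneJ m 𝒥) a')) (fun b' => τ a' b') b) a

/-- The feasible set `F` of the linear program: `(n−1) × (n−1)` matrices `τ` supported on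
`𝒥` satisfying `0 ≤ I_{n−1} − τ ≤ 1` (entrywise), `0 ≤ τ 1_𝒥^- ≤ 1`, `0 ≤ r_𝒥^- τ ≤ 1`
(componentwise), and `0 ≤ r_𝒥^- τ 1_𝒥^- ≤ 1`. -/
noncomputable def feasible (m : ℕ) (p : Fin (m + 1) → ℝ) (𝒥 : Finset (Fin m)) :
    Set (Matrix (Fin m) (Fin m) ℝ) :=
  {τ | (∀ j k : Fin m, (j ∉ 𝒥 ∨ k ∉ 𝒥) → τ j k = 0) ∧
    (∀ j k : Fin m, 0 ≤ ((1 : Matrix (Fin m) (Fin m) ℝ) - τ) j k ∧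
      ((1 : Matrix (Fin m) (Fin m) ℝ) - τ) j k ≤ 1) ∧
    (∀ j : Fin m, 0 ≤ τ.mulVec (oneJ m 𝒥) j ∧ τ.mulVec (oneJ m 𝒥) j ≤ 1) ∧
    (∀ k : Fin m, 0 ≤ Matrix.vecMul (rJ m p 𝒥) τ k ∧ Matrix.vecMul (rJ m p 𝒥) τ k ≤ 1) ∧
    (0 ≤ dotProduct (rJ m p 𝒥) (τ.mulVec (oneJ m 𝒥)) ∧
      dotProduct (rJ m p 𝒥) (τ.mulVec (oneJ m 𝒥)) ≤ 1)}

/-- the feasible set `F` is nonempty, convex, and compact, and for any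
`x, y ∈ ℝ^n` the linear objective `τ ↦ x^T τ^{(p)}_{(𝒥)} y` attains its minimum on `F`
at some `τ* ∈ F`, for which `I − (τ*)^{(p)}_{(𝒥)} ∈ ⟨p⟩⁺`. -/
lemma contEntry (j k : Fin m) : Continuous fun τ : Matrix (Fin m) (Fin m) ℝ => τ j k :=
  continuous_apply_apply j k

lemma contMulVec (v : Fin m → ℝ) (j : Fin m) :
    Continuous fun τ : Matrix (Fin m) (Fin m) ℝ => τ.mulVec v j := by
  simp only [Matrix.mulVec, dotProduct]
  exact continuous_finset_sum _ fun k _ => (contEntry j k).mul continuous_const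

lemma contVecMul (v : Fin m → ℝ) (k : Fin m) :
    Continuous fun τ : Matrix (Fin m) (Fin m) ℝ => Matrix.vecMul v τ k := by
  simp only [Matrix.vecMul, dotProduct]
  exact continuous_finset_sum _ fun j _ => continuous_const.mul (contEntry j k)

lemma contDot (v w : Fin m → ℝ) :
    Continuous fun τ : Matrix (Fin m) (Fin m) ℝ => dotProduct v (τ.mulVec w) := by
  simp only [dotProduct]
  exact continuous_finset_sum _ fun j _ => continuous_const.mul (contMulVec w j)

lemma feas_closed (m : ℕ) (p : Fin (m+1) → ℝ) (𝒥 : Finset (Fin m)) :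
    IsClosed (feasible m p 𝒥) := by
  have h1 : IsClosed {τ : Matrix (Fin m) (Fin m) ℝ |
      ∀ j k : Fin m, (j ∉ 𝒥 ∨ k ∉ 𝒥) → τ j k = 0} := by
    simp only [Set.setOf_forall]
    exact isClosed_iInter fun j => isClosed_iInter fun k => isClosed_iInter fun _ =>
      isClosed_eq (contEntry j k) continuous_const
  have h2 : IsClosed {τ : Matrix (Fin m) (Fin m) ℝ |
      ∀ j k : Fin m, 0 ≤ ((1 : Matrix (Fin m) (Fin m) ℝ) - τ) j k ∧
        ((1 : Matrix (Fin m) (Fin m) ℝ) - τ) j k ≤ 1} := by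
    simp only [Set.setOf_forall, Set.setOf_and]
    refine isClosed_iInter fun j => isClosed_iInter fun k => IsClosed.inter ?_ ?_
    · exact isClosed_le continuous_const (continuous_const.sub (contEntry j k))
    · exact isClosed_le (continuous_const.sub (contEntry j k)) continuous_const
  have h3 : IsClosed {τ : Matrix (Fin m) (Fin m) ℝ |
      ∀ j : Fin m, 0 ≤ τ.mulVec (oneJ m 𝒥) j ∧ τ.mulVec (oneJ m 𝒥) j ≤ 1} := by
    simp only [Set.setOf_forall, Set.setOf_and]
    refine isClosed_iInter fun j => IsClosed.inter ?_ ?_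
    · exact isClosed_le continuous_const (contMulVec _ j)
    · exact isClosed_le (contMulVec _ j) continuous_const
  have h4 : IsClosed {τ : Matrix (Fin m) (Fin m) ℝ |
      ∀ k : Fin m, 0 ≤ Matrix.vecMul (rJ m p 𝒥) τ k ∧ Matrix.vecMul (rJ m p 𝒥) τ k ≤ 1} := by
    simp only [Set.setOf_forall, Set.setOf_and]
    refine isClosed_iInter fun k => IsClosed.inter ?_ ?_
    · exact isClosed_le continuous_const (contVecMul _ k)
    · exact isClosed_le (contVecMul _ k) continuous_const
  have h5 : IsClosed {τ : Matrix (Fin m) (Fin m) ℝ |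
      0 ≤ dotProduct (rJ m p 𝒥) (τ.mulVec (oneJ m 𝒥)) ∧
        dotProduct (rJ m p 𝒥) (τ.mulVec (oneJ m 𝒥)) ≤ 1} := by
    simp only [Set.setOf_and]
    exact (isClosed_le continuous_const (contDot _ _)).inter
      (isClosed_le (contDot _ _) continuous_const)
  exact h1.inter (h2.inter (h3.inter (h4.inter h5)))

lemma feas_compact (m : ℕ) (p : Fin (m+1) → ℝ) (𝒥 : Finset (Fin m)) :
    IsCompact (feasible m p 𝒥) := by
  have hK : IsCompact ((Set.univ.pi fun _ : Fin m => Set.univ.pi fun _ : Fin m =>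
      Set.Icc (-1 : ℝ) 1) : Set (Matrix (Fin m) (Fin m) ℝ)) :=
    isCompact_univ_pi fun _ => isCompact_univ_pi fun _ => isCompact_Icc
  refine hK.of_isClosed_subset (feas_closed m p 𝒥) ?_
  intro τ hτ
  intro j _ k _
  obtain ⟨h0, h1⟩ := hτ.2.1 j k
  have h0 : 0 ≤ (1 : Matrix (Fin m) (Fin m) ℝ) j k - τ j k := h0
  have h1 : (1 : Matrix (Fin m) (Fin m) ℝ) j k - τ j k ≤ 1 := h1
  simp only [Matrix.one_apply] at h0 h1
  constructor
  · by_cases h : j = k <;> simp [h] at h0 h1 ⊢ <;> linarith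
  · by_cases h : j = k <;> simp [h] at h0 h1 ⊢ <;> linarith

lemma feas_zero (m : ℕ) (p : Fin (m+1) → ℝ) (𝒥 : Finset (Fin m)) :
    (0 : Matrix (Fin m) (Fin m) ℝ) ∈ feasible m p 𝒥 := by
  refine ⟨fun j k _ => rfl, fun j k => ?_, ?_, ?_, ?_⟩
  · simp only [sub_zero, Matrix.one_apply]
    by_cases h : j = k <;> simp [h]
  · intro j; simp [Matrix.mulVec_zero]  -- mulVec of zero matrix
  · intro k; simp [Matrix.vecMul_zero]
  · simp [Matrix.mulVec_zero]

lemma convex_unit (a b u v : ℝ) (ha : 0 ≤ a) (hb : 0 ≤ b) (hab : a + b = 1)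
    (hu : 0 ≤ u ∧ u ≤ 1) (hv : 0 ≤ v ∧ v ≤ 1) :
    0 ≤ a * u + b * v ∧ a * u + b * v ≤ 1 :=
  ⟨by nlinarith [hu.1, hv.1], by nlinarith [hu.2, hv.2]⟩

lemma feas_convex (m : ℕ) (p : Fin (m+1) → ℝ) (𝒥 : Finset (Fin m)) :
    Convex ℝ (feasible m p 𝒥) := by
  intro σ hσ τ hτ a b ha hb hab
  have key : ∀ (f : Matrix (Fin m) (Fin m) ℝ → ℝ),
      (∀ ρ η : Matrix (Fin m) (Fin m) ℝ, f (ρ + η) = f ρ + f η) →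
      (∀ (c : ℝ) ρ, f (c • ρ) = c * f ρ) →
      f (a • σ + b • τ) = a * f σ + b * f τ := by
    intro f hadd hsmul
    rw [hadd, hsmul, hsmul]
  have entry : ∀ j k, (a • σ + b • τ) j k = a * σ j k + b * τ j k := by
    intro j k; simp [Matrix.add_apply, Matrix.smul_apply, smul_eq_mul]
  have hmv : ∀ j, (a • σ + b • τ).mulVec (oneJ m 𝒥) j
      = a * σ.mulVec (oneJ m 𝒥) j + b * τ.mulVec (oneJ m 𝒥) j := by
    intro j
    simp [Matrix.add_mulVec, Matrix.smul_mulVec, Pi.add_apply, Pi.smul_apply, smul_eq_mul]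
  have hvm : ∀ k, Matrix.vecMul (rJ m p 𝒥) (a • σ + b • τ) k
      = a * Matrix.vecMul (rJ m p 𝒥) σ k + b * Matrix.vecMul (rJ m p 𝒥) τ k := by
    intro k
    simp only [Matrix.vecMul, dotProduct, Matrix.add_apply, Matrix.smul_apply,
      smul_eq_mul, mul_add, Finset.sum_add_distrib, Finset.mul_sum]
    congr 1 <;> exact Finset.sum_congr rfl fun j _ => by ring
  have hdp : dotProduct (rJ m p 𝒥) ((a • σ + b • τ).mulVec (oneJ m 𝒥))
      = a * dotProduct (rJ m p 𝒥) (σ.mulVec (oneJ m 𝒥))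
        + b * dotProduct (rJ m p 𝒥) (τ.mulVec (oneJ m 𝒥)) := by
    simp only [dotProduct, hmv, mul_add, Finset.sum_add_distrib, Finset.mul_sum]
    congr 1 <;> exact Finset.sum_congr rfl fun j _ => by ring
  refine ⟨?_, ?_, ?_, ?_, ?_⟩
  · intro j k h
    rw [entry, hσ.1 j k h, hτ.1 j k h]; ring
  · intro j k
    have e : ((1 : Matrix (Fin m) (Fin m) ℝ) - (a • σ + b • τ)) j k
        = a * (((1 : Matrix (Fin m) (Fin m) ℝ) - σ) j k)
          + b * (((1 : Matrix (Fin m) (Fin m) ℝ) - τ) j k) := by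
      simp only [Matrix.sub_apply, entry]
      linear_combination (-(((1 : Matrix (Fin m) (Fin m) ℝ)) j k)) * hab
    rw [e]
    exact convex_unit a b _ _ ha hb hab (hσ.2.1 j k) (hτ.2.1 j k)
  · intro j
    rw [hmv j]
    exact convex_unit a b _ _ ha hb hab (hσ.2.2.1 j) (hτ.2.2.1 j)
  · intro k
    rw [hvm k]
    exact convex_unit a b _ _ ha hb hab (hσ.2.2.2.1 k) (hτ.2.2.2.1 k)
  · rw [hdp]
    exact convex_unit a b _ _ ha hb hab hσ.2.2.2.2 hτ.2.2.2.2

section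
variable {p : Fin (m+1) → ℝ} {𝒥 : Finset (Fin m)} {τ : Matrix (Fin m) (Fin m) ℝ}

lemma tauExt_cc (a' b' : Fin m) :
    tauExt m p 𝒥 τ a'.castSucc b'.castSucc = τ a' b' := by
  simp [tauExt]

lemma tauExt_cl (a' : Fin m) :
    tauExt m p 𝒥 τ a'.castSucc (Fin.last m) = -(τ.mulVec (oneJ m 𝒥) a') := by
  simp [tauExt]

lemma tauExt_lc (b' : Fin m) :
    tauExt m p 𝒥 τ (Fin.last m) b'.castSucc = -(Matrix.vecMul (rJ m p 𝒥) τ b') := by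
  simp [tauExt]

lemma tauExt_ll :
    tauExt m p 𝒥 τ (Fin.last m) (Fin.last m)
      = dotProduct (rJ m p 𝒥) (τ.mulVec (oneJ m 𝒥)) := by
  simp [tauExt]

end

section
variable {p : Fin (m+1) → ℝ} {𝒥 : Finset (Fin m)} {τ : Matrix (Fin m) (Fin m) ℝ}

lemma hrow_sum (hs : ∀ j k : Fin m, (j ∉ 𝒥 ∨ k ∉ 𝒥) → τ j k = 0) (j : Fin m) :
    τ.mulVec (oneJ m 𝒥) j = ∑ k, τ j k := by
  simp only [Matrix.mulVec, dotProduct]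
  refine Finset.sum_congr rfl fun k _ => ?_
  by_cases h : k ∈ 𝒥
  · simp [oneJ, h]
  · simp [oneJ, h, hs j k (Or.inr h)]

lemma hmv_zero (hs : ∀ j k : Fin m, (j ∉ 𝒥 ∨ k ∉ 𝒥) → τ j k = 0) {j : Fin m} (hj : j ∉ 𝒥) :
    τ.mulVec (oneJ m 𝒥) j = 0 := by
  rw [hrow_sum hs]
  exact Finset.sum_eq_zero fun k _ => hs j k (Or.inl hj)

lemma hpr (hp : ∀ a, 0 < p a) {j : Fin m} (hj : j ∈ 𝒥) :
    p (Fin.last m) * rJ m p 𝒥 j = p j.castSucc := by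
  simp only [rJ, hj, if_true, r]
  rw [mul_comm, div_mul_cancel₀ _ (hp (Fin.last m)).ne']

lemma rowsum_tauExt (hs : ∀ j k : Fin m, (j ∉ 𝒥 ∨ k ∉ 𝒥) → τ j k = 0) (a : Fin (m+1)) :
    ∑ b, tauExt m p 𝒥 τ a b = 0 := by
  induction a using Fin.lastCases with
  | last =>
    rw [Fin.sum_univ_castSucc]
    simp only [tauExt_lc, tauExt_ll]
    rw [dotProduct]
    have : ∀ j : Fin m, rJ m p 𝒥 j * τ.mulVec (oneJ m 𝒥) j = ∑ b', rJ m p 𝒥 j * τ j b' := by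
      intro j
      rw [hrow_sum hs, Finset.mul_sum]
    rw [Finset.sum_congr rfl fun j _ => this j, Finset.sum_comm]
    simp only [Matrix.vecMul, dotProduct]
    rw [Finset.sum_neg_distrib]
    ring_nf
  | cast a' =>
    rw [Fin.sum_univ_castSucc]
    simp only [tauExt_cc, tauExt_cl]
    rw [hrow_sum hs]
    ring

lemma colsum_tauExt (hp : ∀ a, 0 < p a)
    (hs : ∀ j k : Fin m, (j ∉ 𝒥 ∨ k ∉ 𝒥) → τ j k = 0) (b : Fin (m+1)) :
    ∑ a, p a * tauExt m p 𝒥 τ a b = 0 := by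
  induction b using Fin.lastCases with
  | last =>
    rw [Fin.sum_univ_castSucc]
    simp only [tauExt_cl, tauExt_ll]
    rw [dotProduct, Finset.mul_sum]
    have : ∀ j : Fin m, p (Fin.last m) * (rJ m p 𝒥 j * τ.mulVec (oneJ m 𝒥) j)
        = p j.castSucc * τ.mulVec (oneJ m 𝒥) j := by
      intro j
      by_cases hj : j ∈ 𝒥
      · rw [← mul_assoc, hpr hp hj]
      · rw [hmv_zero hs hj]; ring
    rw [Finset.sum_congr rfl fun j _ => this j]
    simp
  | cast b' =>
    rw [Fin.sum_univ_castSucc]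
    simp only [tauExt_cc, tauExt_lc]
    simp only [Matrix.vecMul, dotProduct, mul_neg, Finset.mul_sum]
    have : ∀ j : Fin m, p (Fin.last m) * (rJ m p 𝒥 j * τ j b') = p j.castSucc * τ j b' := by
      intro j
      by_cases hj : j ∈ 𝒥
      · rw [← mul_assoc, hpr hp hj]
      · rw [hs j b' (Or.inl hj)]; ring
    rw [Finset.sum_congr rfl fun j _ => this j]
    simp

end

section
variable {p : Fin (m+1) → ℝ} {𝒥 : Finset (Fin m)} {τ : Matrix (Fin m) (Fin m) ℝ}

lemma entry_nonneg (hτ : τ ∈ feasible m p 𝒥) (a b : Fin (m+1)) :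
    0 ≤ ((1 : Matrix (Fin (m+1)) (Fin (m+1)) ℝ) - tauExt m p 𝒥 τ) a b := by
  rw [Matrix.sub_apply]
  induction a using Fin.lastCases with
  | last =>
    induction b using Fin.lastCases with
    | last =>
      rw [tauExt_ll, Matrix.one_apply_eq]
      linarith [hτ.2.2.2.2.2]
    | cast b' =>
      rw [tauExt_lc, Matrix.one_apply_ne (Fin.castSucc_lt_last b').ne']
      simpa using (hτ.2.2.2.1 b').1
  | cast a' =>
    induction b using Fin.lastCases with
    | last =>
      rw [tauExt_cl, Matrix.one_apply_ne (Fin.castSucc_lt_last a').ne]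
      simpa using (hτ.2.2.1 a').1
    | cast b' =>
      rw [tauExt_cc]
      have h1 : ((1 : Matrix (Fin (m+1)) (Fin (m+1)) ℝ)) a'.castSucc b'.castSucc
          = ((1 : Matrix (Fin m) (Fin m) ℝ)) a' b' := by
        simp [Matrix.one_apply, Fin.castSucc_inj]
      rw [h1]
      simpa [Matrix.sub_apply] using (hτ.2.1 a' b').1

lemma rowsum_one (hτ : τ ∈ feasible m p 𝒥) :
    ((1 : Matrix (Fin (m+1)) (Fin (m+1)) ℝ) - tauExt m p 𝒥 τ).mulVec
      (fun _ => (1 : ℝ)) = (fun _ => (1 : ℝ)) := by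
  funext a
  simp only [Matrix.mulVec, dotProduct, Matrix.sub_apply, mul_one,
    Finset.sum_sub_distrib, rowsum_tauExt hτ.1, sub_zero, Matrix.one_apply]
  simp

lemma colbal (hp : ∀ a, 0 < p a) (hτ : τ ∈ feasible m p 𝒥) :
    Matrix.vecMul p ((1 : Matrix (Fin (m+1)) (Fin (m+1)) ℝ) - tauExt m p 𝒥 τ) = p := by
  funext b
  simp only [Matrix.vecMul, dotProduct, Matrix.sub_apply, mul_sub,
    Finset.sum_sub_distrib, colsum_tauExt hp hτ.1, sub_zero, Matrix.one_apply]
  simp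

lemma cont_tauExt_entry (a b : Fin (m+1)) :
    Continuous fun τ : Matrix (Fin m) (Fin m) ℝ => tauExt m p 𝒥 τ a b := by
  induction a using Fin.lastCases with
  | last =>
    induction b using Fin.lastCases with
    | last => simp only [tauExt_ll]; exact contDot _ _
    | cast b' => simp only [tauExt_lc]; exact (contVecMul _ b').neg
  | cast a' =>
    induction b using Fin.lastCases with
    | last => simp only [tauExt_cl]; exact (contMulVec _ a').neg
    | cast b' => simp only [tauExt_cc]; exact contEntry a' b'

lemma cont_obj (x y : Fin (m+1) → ℝ) :
    Continuous fun τ : Matrix (Fin m) (Fin m) ℝ =>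
      dotProduct x ((tauExt m p 𝒥 τ).mulVec y) := by
  simp only [dotProduct, Matrix.mulVec]
  exact continuous_finset_sum _ fun a _ => continuous_const.mul
    (continuous_finset_sum _ fun b _ => (cont_tauExt_entry a b).mul continuous_const)

end


theorem stmt19 (m : ℕ) (hm : 1 ≤ m) (p : Fin (m + 1) → ℝ)
    (hp : ∀ a, 0 < p a) (hsum : ∑ a, p a = 1) (𝒥 : Finset (Fin m)) :
    (feasible m p 𝒥).Nonempty ∧
    Convex ℝ (feasible m p 𝒥) ∧
    IsCompact (feasible m p 𝒥) ∧
    ∀ x y : Fin (m + 1) → ℝ,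
      ∃ τs ∈ feasible m p 𝒥,
        (∀ τ ∈ feasible m p 𝒥,
          dotProduct x ((tauExt m p 𝒥 τs).mulVec y) ≤
            dotProduct x ((tauExt m p 𝒥 τ).mulVec y)) ∧
        (∀ a b, 0 ≤ ((1 : Matrix (Fin (m + 1)) (Fin (m + 1)) ℝ) - tauExt m p 𝒥 τs) a b) ∧
        ((1 : Matrix (Fin (m + 1)) (Fin (m + 1)) ℝ) - tauExt m p 𝒥 τs).mulVec
          (fun _ => (1 : ℝ)) = (fun _ => (1 : ℝ)) ∧
        Matrix.vecMul p ((1 : Matrix (Fin (m + 1)) (Fin (m + 1)) ℝ) - tauExt m p 𝒥 τs) = p := by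
  refine ⟨⟨0, feas_zero m p 𝒥⟩, feas_convex m p 𝒥, feas_compact m p 𝒥, ?_⟩
  intro x y
  obtain ⟨τs, hτs, hmin⟩ := (feas_compact m p 𝒥).exists_isMinOn ⟨0, feas_zero m p 𝒥⟩
    (cont_obj x y).continuousOn
  exact ⟨τs, hτs, fun τ hτ => hmin hτ, entry_nonneg hτs, rowsum_one hτs, colbal hp hτs⟩
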